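/- (Theorem 1 of the paper, probabilistic form: almost-sure limit of the weight proportion under repeated dropout sampling.) Let x_1, …, x_{n'} be pairwise orthogonal nonzero vectors in ℝ^m, let y ∈ ℝ^m, and let β* be the OLS coefficient vector with β*_1 ≠ 0. Fix γ₀ ∈ [0,1) and ρ_1, …, ρ_{n'} with ρ_1 = 1 and 0 ≤ ρ_i ≤ 1, and set retention probabilities p_i = 1 − ρ_i γ₀. Let S^{(1)}, S^{(2)}, … be an i.i.d. sequence of dropout samples with retention probabilities p_1, …, p_{n'}, and define β̄_i^{(N)} = (1/N) Σ_{n=1}^N β̂(S^{(n)})_i. Then the proportion |β̄_1^{(N)}| / Σ_{i=1}^{n'} |β̄_i^{(N)}| converges almost surely, as N → ∞, to r(γ₀) = p_1 |β*_1| / Σ_{i=1}^{n'} p_i |β*_i|. -/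

import Mathlib

open scoped RealInnerProductSpace
open MeasureTheory ProbabilityTheory Filter

/-- Theorem 1 (probabilistic form): with pairwise orthogonal nonzero columns `x i`, OLS
coefficients `βstar` with `βstar 1 ≠ 0`, dropout rate `γ₀ ∈ [0,1)`, relative dropout factors
`ρ i` (`ρ 1 = 1`, `0 ≤ ρ i ≤ 1`), retention probabilities `p i = 1 − ρ i * γ₀`, and an i.i.d.
sequence of dropout samples `S 0, S 1, …`, the proportion
`|β̄ 1 (N)| / ∑ i, |β̄ i (N)|` of the average estimators
`β̄ i (N) = (1/N) ∑_{n<N} β̂(S n) i` converges almost surely to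
`p 1 * |βstar 1| / ∑ i, p i * |βstar i|` as `N → ∞`. -/
theorem dropout_weight_proportion_tendsto
    {m n' : ℕ} (hn : 0 < n')
    (x : Fin n' → EuclideanSpace ℝ (Fin m)) (y : EuclideanSpace ℝ (Fin m))
    (hx : ∀ i, x i ≠ 0)
    (horth : ∀ i j, i ≠ j → ⟪x i, x j⟫ = 0)
    (βstar : Fin n' → ℝ)
    (hβstar : ∀ i, βstar i = ⟪x i, y⟫ / ‖x i‖ ^ 2)
    (hβ1 : βstar ⟨0, hn⟩ ≠ 0)
    (γ₀ : ℝ) (hγ₀ : γ₀ ∈ Set.Ico (0 : ℝ) 1)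
    (ρ : Fin n' → ℝ) (hρ1 : ρ ⟨0, hn⟩ = 1) (hρ : ∀ i, 0 ≤ ρ i ∧ ρ i ≤ 1)
    (p : Fin n' → ℝ) (hp : ∀ i, p i = 1 - ρ i * γ₀)
    {Ω : Type*} [MeasurableSpace Ω] (μ : Measure Ω) [IsProbabilityMeasure μ]
    (S : ℕ → Ω → Finset (Fin n'))
    (hMeas : ∀ n i, MeasurableSet {ω | i ∈ S n ω})
    -- within each dropout sample, memberships are independent with probability `p i`
    (hIndepIn : ∀ n, iIndepSet (fun i => {ω | i ∈ S n ω}) μ)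
    (hProb : ∀ n i, μ {ω | i ∈ S n ω} = ENNReal.ofReal (p i))
    -- the dropout samples form an independent, identically distributed sequence
    (hIndepSeq : iIndepFun (m := fun _ => (⊤ : MeasurableSpace (Finset (Fin n')))) S μ)
    (hIdent : ∀ n, @IdentDistrib Ω Ω (Finset (Fin n')) _ _ ⊤ (S n) (S 0) μ μ)
    -- the average estimator
    (βbar : Fin n' → ℕ → Ω → ℝ)
    (hβbar : ∀ i N ω, βbar i N ω =
      (1 / (N : ℝ)) * ∑ n ∈ Finset.range N, (if i ∈ S n ω then βstar i else 0)) :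
    ∀ᵐ ω ∂μ,
      Tendsto (fun N : ℕ => |βbar ⟨0, hn⟩ N ω| / ∑ i, |βbar i N ω|)
        atTop (nhds (p ⟨0, hn⟩ * |βstar ⟨0, hn⟩| / ∑ i, p i * |βstar i|)) := by

  classical
  set i0 : Fin n' := ⟨0, hn⟩ with hi0
  have hγ0 := hγ₀.1
  have hγ1 := hγ₀.2
  have hp_pos : ∀ i, 0 < p i := by
    intro i
    rw [hp]
    nlinarith [(hρ i).1, (hρ i).2]
  have hp_le : ∀ i, p i ≤ 1 := by
    intro i
    rw [hp]
    nlinarith [(hρ i).1, (hρ i).2]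
  -- SLLN for each coordinate
  have key : ∀ i, ∀ᵐ ω ∂μ, Tendsto (fun N => βbar i N ω) atTop (nhds (p i * βstar i)) := by
    intro i
    letI : MeasurableSpace (Finset (Fin n')) := ⊤
    set f : Finset (Fin n') → ℝ := fun s => if i ∈ s then βstar i else 0 with hf
    have hfm : Measurable[⊤] f := (measurable_from_top : Measurable[⊤] f)
    set X : ℕ → Ω → ℝ := fun n ω => f (S n ω) with hX
    have hXind : ∀ n, X n = Set.indicator {ω | i ∈ S n ω} (fun _ => βstar i) := by
      intro n
      ext ω
      simp [hX, hf, Set.indicator_apply]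
    have hint : Integrable (X 0) μ := by
      rw [hXind 0]
      exact (integrable_indicator_iff (hMeas 0 i)).2
        (integrableOn_const (measure_ne_top _ _))
    have hindep : Pairwise (Function.onFun (IndepFun · · μ) X) := by
      intro a b hab
      exact (hIndepSeq.indepFun hab).comp hfm hfm
    have hident : ∀ n, IdentDistrib (X n) (X 0) μ μ := fun n => (hIdent n).comp hfm
    have hmean : μ[X 0] = p i * βstar i := by
      rw [hXind 0, integral_indicator_const _ (hMeas 0 i), measureReal_def, hProb 0 i, smul_eq_mul,
        ENNReal.toReal_ofReal (hp_pos i).le, mul_comm]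
    have h := strong_law_ae_real X hint hindep hident
    rw [hmean] at h
    filter_upwards [h] with ω hω
    have : (fun N : ℕ => βbar i N ω) = fun N : ℕ => (∑ n ∈ Finset.range N, X n ω) / N := by
      ext N
      rw [hβbar]
      ring
    rw [this]
    exact hω
  rw [← ae_all_iff] at key
  filter_upwards [key] with ω hω
  have hnum : Tendsto (fun N : ℕ => |βbar i0 N ω|) atTop (nhds (p i0 * |βstar i0|)) := by
    have := (hω i0).abs
    rwa [abs_mul, abs_of_pos (hp_pos i0)] at this
  have hden : Tendsto (fun N : ℕ => ∑ i, |βbar i N ω|) atTop (nhds (∑ i, p i * |βstar i|)) := by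
    have heq : (∑ i, p i * |βstar i|) = ∑ i, |p i * βstar i| := by
      refine Finset.sum_congr rfl fun i _ => ?_
      rw [abs_mul, abs_of_pos (hp_pos i)]
    rw [heq]
    exact tendsto_finset_sum Finset.univ (fun i _ => (hω i).abs)
  have hden_ne : (∑ i, p i * |βstar i|) ≠ 0 := by
    have hpos : 0 < p i0 * |βstar i0| := mul_pos (hp_pos i0) (abs_pos.2 hβ1)
    have : 0 < ∑ i, p i * |βstar i| :=
      Finset.sum_pos' (fun i _ => mul_nonneg (hp_pos i).le (abs_nonneg _))
        ⟨i0, Finset.mem_univ _, hpos⟩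
    exact this.ne'
  exact hnum.div hden hden_ne
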